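/- The tree operations U_1, …, U_{N−1} and Λ are well defined (each sends a tree with N labeled edges to a tree with N labeled edges), each is a bijection of the set of isomorphism classes of trees with N labeled edges, and they satisfy the braid-cyclic relations: Λ^N = id; Λ ∘ U_k = U_{k+1} ∘ Λ for k = 1, …, N−2; U_k ∘ U_l = U_l ∘ U_k whenever |k − l| ≥ 2; and U_k ∘ U_{k+1} ∘ U_k = U_{k+1} ∘ U_k ∘ U_{k+1} for k = 1, …, N−2. -/

import Mathlib

open scoped Classical

/-! Trees with `N` labeled edges.

A tree with `N` labeled edges (on `N+1` vertices) is modeled as a map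
`ℓ : ZMod N → Sym2 V` (for `V = Fin (N+1)`) assigning to each label an edge
(an unordered pair of vertices), which is injective, has no loop edges, and whose
edges form a tree.  Two such trees are identified when there is a label-preserving
graph isomorphism, i.e. a permutation of the vertices carrying one edge-labeling
to the other. -/

/-- The operation `Λ` on trees with labeled edges: the underlying tree is unchanged
and all edge labels are shifted cyclically by one, `i ↦ (i+1) mod N`
(so the edge labeled `i` of the new tree is the edge labeled `i-1` of the old one). -/
def treeLam {N : ℕ} {V : Type*} (ℓ : ZMod N → Sym2 V) : ZMod N → Sym2 V :=
  fun i => ℓ (i - 1)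

/-- The operation `U_k` on trees with labeled edges: if the edges labeled `k-1` and `k`
have no common vertex, the two labels are exchanged; if the edge labeled `k-1` joins
`A` and `B` and the edge labeled `k` joins `A` and `C`, then the edge `AB` receives
label `k`, the edge `AC` is deleted, and a new edge `BC` labeled `k-1` is added. -/
noncomputable def treeU {N : ℕ} {V : Type*}
    (k : ZMod N) (ℓ : ZMod N → Sym2 V) : ZMod N → Sym2 V :=
  if h : ∃ a, a ∈ ℓ (k - 1) ∧ a ∈ ℓ k then
    -- the common vertex is `A := h.choose`; `B`, `C` are the other endpoints
    fun i =>
      if i = k - 1 then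
        Sym2.mk (Sym2.Mem.other h.choose_spec.1) (Sym2.Mem.other h.choose_spec.2)
      else if i = k then ℓ (k - 1)
      else ℓ i
  else
    fun i =>
      if i = k - 1 then ℓ k
      else if i = k then ℓ (k - 1)
      else ℓ i

/-- Two edge-labelings are equivalent iff some label-preserving graph isomorphism
(a permutation of the vertices) carries one to the other. -/
def treeEquiv {N : ℕ} {V : Type*} (ℓ ℓ' : ZMod N → Sym2 V) : Prop :=
  ∃ σ : Equiv.Perm V, ∀ i, ℓ' i = Sym2.map σ (ℓ i)

/-- `ℓ` is a tree with `N` labeled edges: the `N` assigned edges are distinct non-loops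
and form a (connected, acyclic) tree on the `N+1` vertices. -/
def IsLTree {N : ℕ} (ℓ : ZMod N → Sym2 (Fin (N + 1))) : Prop :=
  Function.Injective ℓ ∧ (∀ i, ¬ (ℓ i).IsDiag) ∧
    (SimpleGraph.fromEdgeSet (Set.range ℓ)).IsTree

section Helpers
variable {V : Type*} {N : ℕ}

lemma rep_of_mem {e : Sym2 V} (hd : ¬ e.IsDiag) {a : V} (ha : a ∈ e) :
    ∃ b, e = s(a, b) ∧ a ≠ b :=
  ⟨Sym2.Mem.other ha, (Sym2.other_spec ha).symm, Ne.symm (Sym2.other_ne hd ha)⟩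

lemma sym2_eq_of_two_mem {z : Sym2 V} {x y : V} (hx : x ∈ z) (hy : y ∈ z) (hxy : x ≠ y) :
    z = s(x, y) := by
  induction z with
  | _ u v =>
    rw [Sym2.mem_iff] at hx hy
    rw [Sym2.eq_iff]
    rcases hx with rfl | rfl <;> rcases hy with rfl | rfl <;> tauto


lemma choose_common_eq {e f : Sym2 V} {A B C : V} (hex : ∃ a, a ∈ e ∧ a ∈ f)
    (he : e = s(A, B)) (hf : f = s(A, C)) (hBC : B ≠ C) : hex.choose = A := by
  subst he; subst hf
  have hc1 := Sym2.mem_iff.mp hex.choose_spec.1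
  have hc2 := Sym2.mem_iff.mp hex.choose_spec.2
  rcases hc1 with h | h
  · exact h
  · rcases hc2 with h' | h'
    · exact h'
    · exact absurd (h.symm.trans h') hBC

lemma other_eq {e : Sym2 V} {a A B : V} (h : a ∈ e) (ha : a = A) (he : e = s(A, B))
    (hAB : A ≠ B) : Sym2.Mem.other h = B := by
  subst ha; subst he
  have hm := Sym2.mem_iff.mp (Sym2.other_mem h)
  have hne := Sym2.other_ne (by simpa using hAB) h
  rcases hm with h' | h'
  · exact absurd h' hne
  · exact h'

lemma treeU_common {k : ZMod N} {ℓ : ZMod N → Sym2 V} {A B C : V}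
    (h1 : ℓ (k - 1) = s(A, B)) (h2 : ℓ k = s(A, C))
    (hAB : A ≠ B) (hAC : A ≠ C) (hBC : B ≠ C) :
    treeU k ℓ = fun i => if i = k - 1 then s(B, C) else if i = k then s(A, B) else ℓ i := by
  have hex : ∃ a, a ∈ ℓ (k - 1) ∧ a ∈ ℓ k :=
    ⟨A, by rw [h1]; exact Sym2.mem_mk_left _ _, by rw [h2]; exact Sym2.mem_mk_left _ _⟩
  rw [treeU, dif_pos hex]
  have hA : hex.choose = A := choose_common_eq hex h1 h2 hBC
  have hB : Sym2.Mem.other hex.choose_spec.1 = B := other_eq hex.choose_spec.1 hA h1 hAB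
  have hC : Sym2.Mem.other hex.choose_spec.2 = C := other_eq hex.choose_spec.2 hA h2 hAC
  funext i
  rw [hB, hC, h1]

lemma treeU_disjoint {k : ZMod N} {ℓ : ZMod N → Sym2 V}
    (h : ¬ ∃ a, a ∈ ℓ (k - 1) ∧ a ∈ ℓ k) :
    treeU k ℓ = fun i => if i = k - 1 then ℓ k else if i = k then ℓ (k - 1) else ℓ i := by
  rw [treeU, dif_neg h]

lemma treeU_apply_ne {k i : ZMod N} {ℓ : ZMod N → Sym2 V} (h1 : i ≠ k - 1) (h2 : i ≠ k) :
    treeU k ℓ i = ℓ i := by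
  rw [treeU]; split <;> simp [h1, h2]

lemma common_extract {k : ZMod N} {ℓ : ZMod N → Sym2 V}
    (hnd1 : ¬ (ℓ (k - 1)).IsDiag) (hnd2 : ¬ (ℓ k).IsDiag) (hne : ℓ (k - 1) ≠ ℓ k)
    (hc : ∃ a, a ∈ ℓ (k - 1) ∧ a ∈ ℓ k) :
    ∃ A B C, ℓ (k - 1) = s(A, B) ∧ ℓ k = s(A, C) ∧ A ≠ B ∧ A ≠ C ∧ B ≠ C := by
  obtain ⟨a, h1, h2⟩ := hc
  obtain ⟨b, hb, hab⟩ := rep_of_mem hnd1 h1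
  obtain ⟨c, hcc, hac⟩ := rep_of_mem hnd2 h2
  refine ⟨a, b, c, hb, hcc, hab, hac, ?_⟩
  rintro rfl
  exact hne (hb.trans hcc.symm)

lemma disj_pair {a b c d : V} (h1 : a ≠ c) (h2 : a ≠ d) (h3 : b ≠ c) (h4 : b ≠ d) :
    ¬ ∃ x, x ∈ s(a, b) ∧ x ∈ s(c, d) := by
  rintro ⟨x, hx1, hx2⟩
  rw [Sym2.mem_iff] at hx1 hx2
  rcases hx1 with rfl | rfl <;> rcases hx2 with rfl | rfl <;> tauto

end Helpers

section MoreHelpers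
open SimpleGraph

lemma connected_transfer {V : Type*} {G G' : SimpleGraph V} (hG : G.Connected)
    (h : ∀ u v, G.Adj u v → G'.Reachable u v) : G'.Connected := by
  have key : ∀ u v, G.Reachable u v → G'.Reachable u v := by
    intro u v huv
    obtain ⟨w⟩ := huv
    induction w with
    | nil => exact Reachable.refl _
    | cons a _ ih => exact (h _ _ a).trans ih
  have hne := hG.nonempty
  exact ⟨fun u v => key u v (hG.preconnected u v)⟩

lemma no_triangle {V : Type*} {G : SimpleGraph V} (hG : G.IsAcyclic) {a b c : V}
    (h1 : G.Adj a b) (h2 : G.Adj b c) (h3 : G.Adj c a) : False := by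
  have hab := h1.ne
  have hbc := h2.ne
  have hca := h3.ne
  refine hG (.cons h1 (.cons h2 (.cons h3 .nil))) ?_
  constructor
  · constructor
    · rw [Walk.isTrail_def]
      simp [Sym2.eq_iff]
      tauto
    · simp
  · simp [hab, hbc, Ne.symm hca]
    exact ⟨Ne.symm hab, hca⟩

lemma isLTree_comp {N : ℕ} {ℓ : ZMod N → Sym2 (Fin (N + 1))} (hL : IsLTree ℓ)
    (π : Equiv.Perm (ZMod N)) : IsLTree (ℓ ∘ π) :=
  ⟨hL.1.comp π.injective, fun i => hL.2.1 _, by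
    rw [Set.range_comp, Equiv.range_eq_univ, Set.image_univ]; exact hL.2.2⟩

lemma isLTree_update {N : ℕ} {ℓ : ZMod N → Sym2 (Fin (N + 1))} (hL : IsLTree ℓ)
    {k : ZMod N} (hk : k - 1 ≠ k) {A B C : Fin (N + 1)}
    (h1 : ℓ (k - 1) = s(A, B)) (h2 : ℓ k = s(A, C))
    (hAB : A ≠ B) (hAC : A ≠ C) (hBC : B ≠ C) :
    IsLTree (fun i => if i = k - 1 then s(B, C) else if i = k then s(A, B) else ℓ i) := by
  obtain ⟨hinj, hnd, htree⟩ := hL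
  set G := SimpleGraph.fromEdgeSet (Set.range ℓ) with hGdef
  have hAdjAB : G.Adj A B := (SimpleGraph.fromEdgeSet_adj _).mpr ⟨⟨k - 1, h1⟩, hAB⟩
  have hAdjAC : G.Adj A C := (SimpleGraph.fromEdgeSet_adj _).mpr ⟨⟨k, h2⟩, hAC⟩
  have hBCnot : s(B, C) ∉ Set.range ℓ := by
    intro hm
    exact no_triangle htree.IsAcyclic hAdjAB ((SimpleGraph.fromEdgeSet_adj _).mpr ⟨hm, hBC⟩)
      hAdjAC.symm
  set ℓ' : ZMod N → Sym2 (Fin (N + 1)) :=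
    fun i => if i = k - 1 then s(B, C) else if i = k then s(A, B) else ℓ i with hl'
  have hval : ∀ i, i ≠ k - 1 → i ≠ k → ℓ' i = ℓ i := by
    intro i hi1 hi2; simp [hl', hi1, hi2]
  have h'1 : ℓ' (k - 1) = s(B, C) := by simp [hl']
  have h'2 : ℓ' k = s(A, B) := by simp [hl', Ne.symm hk]
  have hABAC : s(A, B) ≠ s(A, C) := by
    intro h; rcases Sym2.eq_iff.mp h with ⟨-, rfl⟩ | ⟨rfl, rfl⟩
    · exact hBC rfl
    · exact hAC rfl
  have hBCAB : s(B, C) ≠ s(A, B) := by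
    intro h; rcases Sym2.eq_iff.mp h with ⟨h3, h4⟩ | ⟨h3, h4⟩
    · exact hAB h3.symm
    · exact hAC h4.symm
  have hrange : Set.range ℓ' = insert s(B, C) (Set.range ℓ \ {s(A, C)}) := by
    ext e; constructor
    · rintro ⟨i, rfl⟩
      by_cases hi1 : i = k - 1
      · rw [hi1, h'1]; exact Set.mem_insert _ _
      · by_cases hi2 : i = k
        · rw [hi2, h'2]
          exact Set.mem_insert_of_mem _ ⟨⟨k - 1, h1⟩, by simpa using hABAC⟩
        · rw [hval i hi1 hi2]
          refine Set.mem_insert_of_mem _ ⟨⟨i, rfl⟩, ?_⟩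
          simp only [Set.mem_singleton_iff]
          intro h
          exact hi2 (hinj (h.trans h2.symm))
    · intro he
      rcases Set.mem_insert_iff.mp he with rfl | ⟨⟨i, rfl⟩, hne⟩
      · exact ⟨k - 1, h'1⟩
      · by_cases hi1 : i = k - 1
        · rw [hi1]; exact ⟨k, by rw [h'2, h1]⟩
        · by_cases hi2 : i = k
          · rw [hi2] at hne; exact absurd h2 (by simpa using hne)
          · exact ⟨i, hval i hi1 hi2⟩
  have hcases : ∀ i, (i = k - 1 ∧ ℓ' i = s(B, C)) ∨ (i = k ∧ ℓ' i = s(A, B)) ∨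
      (i ≠ k - 1 ∧ i ≠ k ∧ ℓ' i = ℓ i) := by
    intro i
    by_cases hi1 : i = k - 1
    · exact Or.inl ⟨hi1, by rw [hi1, h'1]⟩
    · by_cases hi2 : i = k
      · exact Or.inr (Or.inl ⟨hi2, by rw [hi2, h'2]⟩)
      · exact Or.inr (Or.inr ⟨hi1, hi2, hval i hi1 hi2⟩)
  refine ⟨?_, ?_, ?_⟩
  · -- injective
    intro i j hij
    have hBCl : ∀ m, s(B, C) ≠ ℓ m := fun m h => hBCnot ⟨m, h.symm⟩
    have hABl : ∀ m, m ≠ k - 1 → s(A, B) ≠ ℓ m := by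
      intro m hm h
      exact hm (hinj (h.symm.trans h1.symm))
    rcases hcases i with ⟨hi, ei⟩ | ⟨hi, ei⟩ | ⟨hi1, hi2, ei⟩ <;>
      rcases hcases j with ⟨hj, ej⟩ | ⟨hj, ej⟩ | ⟨hj1, hj2, ej⟩
    · rw [hi, hj]
    · rw [ei, ej] at hij; exact absurd hij hBCAB
    · rw [ei, ej] at hij; exact absurd hij (hBCl j)
    · rw [ei, ej] at hij; exact absurd hij.symm hBCAB
    · rw [hi, hj]
    · rw [ei, ej] at hij; exact absurd hij (hABl j hj1)
    · rw [ei, ej] at hij; exact absurd hij.symm (hBCl i)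
    · rw [ei, ej] at hij; exact absurd hij.symm (hABl i hi1)
    · rw [ei, ej] at hij; exact hinj hij
  · -- no diag
    intro i
    rcases hcases i with ⟨-, ei⟩ | ⟨-, ei⟩ | ⟨-, -, ei⟩ <;> rw [ei]
    · simpa using hBC
    · simpa using hAB
    · exact hnd i
  · -- tree
    set G' := SimpleGraph.fromEdgeSet (Set.range ℓ') with hG'def
    have hG'AB : G'.Adj A B := (SimpleGraph.fromEdgeSet_adj _).mpr ⟨⟨k, h'2⟩, hAB⟩
    have hG'BC : G'.Adj B C := (SimpleGraph.fromEdgeSet_adj _).mpr ⟨⟨k - 1, h'1⟩, hBC⟩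
    constructor
    · -- connected
      refine connected_transfer htree.isConnected ?_
      intro u v huv
      obtain ⟨hm, huvne⟩ := (SimpleGraph.fromEdgeSet_adj _).mp huv
      by_cases hsv : s(u, v) = s(A, C)
      · rcases Sym2.eq_iff.mp hsv with ⟨rfl, rfl⟩ | ⟨rfl, rfl⟩
        · exact hG'AB.reachable.trans hG'BC.reachable
        · exact (hG'BC.symm.reachable.trans hG'AB.symm.reachable)
      · refine ((SimpleGraph.fromEdgeSet_adj _).mpr ⟨?_, huvne⟩).reachable
        rw [hrange]
        exact Set.mem_insert_of_mem _ ⟨hm, hsv⟩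
    · -- acyclic
      intro u c hc
      by_cases hbc : s(B, C) ∈ c.edges
      · have hkey := (SimpleGraph.adj_and_reachable_delete_edges_iff_exists_cycle.mpr
          ⟨u, c, hc, hbc⟩).2
        have hle : (G' \ SimpleGraph.fromEdgeSet {s(B, C)}) ≤
            (G \ SimpleGraph.fromEdgeSet {s(A, C)}) := by
          intro x y hxy
          rw [SimpleGraph.sdiff_adj, SimpleGraph.fromEdgeSet_adj,
            SimpleGraph.fromEdgeSet_adj] at hxy
          obtain ⟨⟨hm, hxyne⟩, hnbc⟩ := hxy
          rw [SimpleGraph.sdiff_adj, SimpleGraph.fromEdgeSet_adj,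
            SimpleGraph.fromEdgeSet_adj]
          rw [hrange] at hm
          rcases Set.mem_insert_iff.mp hm with heq | ⟨hm', hnac⟩
          · exact absurd ⟨heq, hxyne⟩ hnbc
          · exact ⟨⟨hm', hxyne⟩, fun hh => hnac hh.1⟩
        have hreach : (G \ SimpleGraph.fromEdgeSet {s(A, C)}).Reachable A C := by
          refine Reachable.trans ?_ (hkey.mono hle)
          refine Adj.reachable ?_
          rw [SimpleGraph.sdiff_adj, SimpleGraph.fromEdgeSet_adj]
          exact ⟨hAdjAB, fun hh => hABAC hh.1⟩
        have hbridge := isAcyclic_iff_forall_adj_isBridge.mp htree.IsAcyclic hAdjAC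
        rw [SimpleGraph.isBridge_iff] at hbridge
        exact hbridge hreach
      · have hsub : ∀ e ∈ c.edges, e ∈ G.edgeSet := by
          intro e he
          have hmem := c.edges_subset_edgeSet he
          rw [SimpleGraph.edgeSet_fromEdgeSet] at hmem ⊢
          obtain ⟨hm, hd⟩ := hmem
          rw [hrange] at hm
          rcases Set.mem_insert_iff.mp hm with rfl | ⟨hm', -⟩
          · exact absurd he hbc
          · exact ⟨hm', hd⟩
        exact htree.IsAcyclic (c.transfer G hsub) (hc.transfer hsub)

end MoreHelpers

section Layer2
open SimpleGraph
variable {N : ℕ} {V : Type*}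

lemma treeEquiv_refl (ℓ : ZMod N → Sym2 V) : treeEquiv ℓ ℓ :=
  ⟨1, fun i => by simp [Sym2.map_id]⟩

lemma treeEquiv_of_eq {ℓ ℓ' : ZMod N → Sym2 V} (h : ℓ' = ℓ) : treeEquiv ℓ ℓ' :=
  ⟨1, fun i => by simp [Sym2.map_id, h]⟩

lemma isLTree_treeLam {ℓ : ZMod N → Sym2 (Fin (N + 1))} (hL : IsLTree ℓ) :
    IsLTree (treeLam ℓ) := by
  have h : treeLam ℓ = ℓ ∘ (Equiv.subRight (1 : ZMod N)) := rfl
  rw [h]; exact isLTree_comp hL _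

lemma treeLam_iterate (n : ℕ) (ℓ : ZMod N → Sym2 V) :
    (treeLam)^[n] ℓ = fun i => ℓ (i - (n : ZMod N)) := by
  induction n with
  | zero => simp
  | succ n ih =>
    rw [Function.iterate_succ_apply', ih]
    funext i
    show ℓ (i - 1 - (n : ZMod N)) = ℓ (i - ((n + 1 : ℕ) : ZMod N))
    congr 1
    push_cast
    ring

lemma common_map {σ : Equiv.Perm V} {e f : Sym2 V} :
    (∃ a, a ∈ Sym2.map σ e ∧ a ∈ Sym2.map σ f) ↔ (∃ a, a ∈ e ∧ a ∈ f) := by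
  constructor
  · rintro ⟨a, h1, h2⟩
    rw [Sym2.mem_map] at h1 h2
    obtain ⟨b, hb, hba⟩ := h1
    obtain ⟨c, hc, hca⟩ := h2
    have hbc : b = c := σ.injective (hba.trans hca.symm)
    exact ⟨b, hb, hbc ▸ hc⟩
  · rintro ⟨a, h1, h2⟩
    exact ⟨σ a, Sym2.mem_map.mpr ⟨a, h1, rfl⟩, Sym2.mem_map.mpr ⟨a, h2, rfl⟩⟩

lemma treeU_map {σ : Equiv.Perm V} {k : ZMod N} {ℓ : ZMod N → Sym2 V}
    (hnd1 : ¬ (ℓ (k - 1)).IsDiag) (hnd2 : ¬ (ℓ k).IsDiag) (hne : ℓ (k - 1) ≠ ℓ k) :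
    treeU k (fun i => Sym2.map σ (ℓ i)) = fun i => Sym2.map σ (treeU k ℓ i) := by
  have hk : k - 1 ≠ k := fun h => hne (congrArg ℓ h)
  by_cases hc : ∃ a, a ∈ ℓ (k - 1) ∧ a ∈ ℓ k
  · obtain ⟨A, B, C, h1, h2, hAB, hAC, hBC⟩ := common_extract hnd1 hnd2 hne hc
    have h1' : (fun i => Sym2.map σ (ℓ i)) (k - 1) = s(σ A, σ B) := by
      simp only [h1, Sym2.map_pair_eq]
    have h2' : (fun i => Sym2.map σ (ℓ i)) k = s(σ A, σ C) := by
      simp only [h2, Sym2.map_pair_eq]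
    rw [treeU_common h1' h2' (σ.injective.ne hAB) (σ.injective.ne hAC) (σ.injective.ne hBC),
      treeU_common h1 h2 hAB hAC hBC]
    funext i
    by_cases hi1 : i = k - 1
    · simp [hi1, Sym2.map_pair_eq]
    · by_cases hi2 : i = k <;> simp [hi1, hi2, h1, Ne.symm hk, Sym2.map_pair_eq]
  · have hc' : ¬ ∃ a, a ∈ (fun i => Sym2.map σ (ℓ i)) (k - 1) ∧
        a ∈ (fun i => Sym2.map σ (ℓ i)) k := by
      simp only []
      exact fun h => hc (common_map.mp h)
    rw [treeU_disjoint hc', treeU_disjoint hc]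
    funext i
    by_cases hi1 : i = k - 1 <;> by_cases hi2 : i = k <;> simp [hi1, hi2, Ne.symm hk]

lemma common_treeU {k : ZMod N} {ℓ : ZMod N → Sym2 V}
    (hnd1 : ¬ (ℓ (k - 1)).IsDiag) (hnd2 : ¬ (ℓ k).IsDiag) (hne : ℓ (k - 1) ≠ ℓ k) :
    (∃ a, a ∈ treeU k ℓ (k - 1) ∧ a ∈ treeU k ℓ k) ↔ (∃ a, a ∈ ℓ (k - 1) ∧ a ∈ ℓ k) := by
  have hk : k - 1 ≠ k := fun h => hne (congrArg ℓ h)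
  by_cases hc : ∃ a, a ∈ ℓ (k - 1) ∧ a ∈ ℓ k
  · obtain ⟨A, B, C, h1, h2, hAB, hAC, hBC⟩ := common_extract hnd1 hnd2 hne hc
    rw [treeU_common h1 h2 hAB hAC hBC]
    simp only [if_pos rfl, if_neg (Ne.symm hk)]
    exact ⟨fun _ => hc, fun _ => ⟨B, by simp, by simp⟩⟩
  · rw [treeU_disjoint hc]
    simp only [if_pos rfl, if_neg (Ne.symm hk)]
    constructor
    · rintro ⟨a, ha1, ha2⟩
      exact absurd ⟨a, ha2, ha1⟩ hc
    · intro h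
      exact absurd h hc

lemma treeU_cube {k : ZMod N} {ℓ : ZMod N → Sym2 V} {A B C : V}
    (hk : k - 1 ≠ k)
    (h1 : ℓ (k - 1) = s(A, B)) (h2 : ℓ k = s(A, C))
    (hAB : A ≠ B) (hAC : A ≠ C) (hBC : B ≠ C) :
    treeU k (treeU k (treeU k ℓ)) = ℓ := by
  have E1 := treeU_common h1 h2 hAB hAC hBC
  have v11 : treeU k ℓ (k - 1) = s(B, C) := by rw [E1]; simp
  have v12 : treeU k ℓ k = s(B, A) := by
    rw [E1]; simp only [if_neg (Ne.symm hk), if_pos rfl]; exact Sym2.eq_swap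
  have E2 := treeU_common v11 v12 hBC hAB.symm hAC.symm
  have v21 : treeU k (treeU k ℓ) (k - 1) = s(C, A) := by rw [E2]; simp
  have v22 : treeU k (treeU k ℓ) k = s(C, B) := by
    rw [E2]; simp only [if_neg (Ne.symm hk), if_pos rfl]; exact Sym2.eq_swap
  have E3 := treeU_common v21 v22 hAC.symm hBC.symm hAB
  rw [E3]; funext i
  by_cases hi1 : i = k - 1
  · rw [if_pos hi1, hi1, h1]
  · rw [if_neg hi1]
    by_cases hi2 : i = k
    · rw [if_pos hi2, hi2, h2]; exact Sym2.eq_swap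
    · rw [if_neg hi2, E2]
      simp only [if_neg hi1, if_neg hi2]
      rw [E1]
      simp only [if_neg hi1, if_neg hi2]

lemma treeU_sq {k : ZMod N} {ℓ : ZMod N → Sym2 V}
    (hk : k - 1 ≠ k) (hc : ¬ ∃ a, a ∈ ℓ (k - 1) ∧ a ∈ ℓ k) :
    treeU k (treeU k ℓ) = ℓ := by
  have E1 := treeU_disjoint hc
  have v11 : treeU k ℓ (k - 1) = ℓ k := by rw [E1]; simp
  have v12 : treeU k ℓ k = ℓ (k - 1) := by
    rw [E1]; simp [Ne.symm hk]
  have hc' : ¬ ∃ a, a ∈ treeU k ℓ (k - 1) ∧ a ∈ treeU k ℓ k := by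
    rw [v11, v12]
    rintro ⟨a, ha1, ha2⟩
    exact hc ⟨a, ha2, ha1⟩
  have E2 := treeU_disjoint hc'
  rw [E2]; funext i
  by_cases hi1 : i = k - 1
  · rw [if_pos hi1, v12, hi1]
  · rw [if_neg hi1]
    by_cases hi2 : i = k
    · rw [if_pos hi2, v11, hi2]
    · rw [if_neg hi2, E1]
      simp only [if_neg hi1, if_neg hi2]

end Layer2

section Layer3
open SimpleGraph
variable {N : ℕ} {V : Type*}

lemma treeLam_apply (ℓ : ZMod N → Sym2 V) (i : ZMod N) : treeLam ℓ i = ℓ (i - 1) := rfl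

lemma isLTree_treeU {ℓ : ZMod N → Sym2 (Fin (N + 1))} (hL : IsLTree ℓ)
    {k : ZMod N} (hk : k - 1 ≠ k) : IsLTree (treeU k ℓ) := by
  have hne : ℓ (k - 1) ≠ ℓ k := fun h => hk (hL.1 h)
  by_cases hc : ∃ a, a ∈ ℓ (k - 1) ∧ a ∈ ℓ k
  · obtain ⟨A, B, C, h1, h2, hAB, hAC, hBC⟩ := common_extract (hL.2.1 _) (hL.2.1 _) hne hc
    rw [treeU_common h1 h2 hAB hAC hBC]
    exact isLTree_update hL hk h1 h2 hAB hAC hBC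
  · rw [treeU_disjoint hc]
    have h : (fun i => if i = k - 1 then ℓ k else if i = k then ℓ (k - 1) else ℓ i)
        = ℓ ∘ (Equiv.swap (k - 1) k) := by
      funext i
      simp only [Function.comp_apply, Equiv.swap_apply_def]
      by_cases hi1 : i = k - 1 <;> by_cases hi2 : i = k <;> simp [hi1, hi2, Ne.symm hk]
    rw [h]; exact isLTree_comp hL _

lemma treeU_localize {k : ZMod N} {ℓ m : ZMod N → Sym2 V}
    (h1 : m (k - 1) = ℓ (k - 1)) (h2 : m k = ℓ k)
    (hnd1 : ¬ (ℓ (k - 1)).IsDiag) (hnd2 : ¬ (ℓ k).IsDiag) (hne : ℓ (k - 1) ≠ ℓ k) :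
    treeU k m = fun i => if i = k - 1 then treeU k ℓ (k - 1)
      else if i = k then treeU k ℓ k else m i := by
  have hk : k - 1 ≠ k := fun h => hne (congrArg ℓ h)
  by_cases hc : ∃ a, a ∈ ℓ (k - 1) ∧ a ∈ ℓ k
  · obtain ⟨A, B, C, g1, g2, hAB, hAC, hBC⟩ := common_extract hnd1 hnd2 hne hc
    have m1 : m (k - 1) = s(A, B) := h1.trans g1
    have m2 : m k = s(A, C) := h2.trans g2
    rw [treeU_common m1 m2 hAB hAC hBC, treeU_common g1 g2 hAB hAC hBC]
    funext i
    by_cases hi1 : i = k - 1 <;> by_cases hi2 : i = k <;> simp [hi1, hi2, Ne.symm hk]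
  · have hc' : ¬ ∃ a, a ∈ m (k - 1) ∧ a ∈ m k := by rw [h1, h2]; exact hc
    rw [treeU_disjoint hc', treeU_disjoint hc]
    funext i
    by_cases hi1 : i = k - 1 <;> by_cases hi2 : i = k <;>
      simp [hi1, hi2, Ne.symm hk, h1, h2]

lemma treeLam_treeU {k : ZMod N} {ℓ : ZMod N → Sym2 V}
    (hnd1 : ¬ (ℓ (k - 1)).IsDiag) (hnd2 : ¬ (ℓ k).IsDiag) (hne : ℓ (k - 1) ≠ ℓ k) :
    treeLam (treeU k ℓ) = treeU (k + 1) (treeLam ℓ) := by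
  have hk : k - 1 ≠ k := fun h => hne (congrArg ℓ h)
  have e1 : k + 1 - 1 = k := by ring
  have g1 : treeLam ℓ (k + 1 - 1) = ℓ (k - 1) := by rw [e1, treeLam_apply]
  have g2 : treeLam ℓ (k + 1) = ℓ k := by rw [treeLam_apply, e1]
  by_cases hc : ∃ a, a ∈ ℓ (k - 1) ∧ a ∈ ℓ k
  · obtain ⟨A, B, C, h1, h2, hAB, hAC, hBC⟩ := common_extract hnd1 hnd2 hne hc
    rw [treeU_common (g1.trans h1) (g2.trans h2) hAB hAC hBC,
      treeU_common h1 h2 hAB hAC hBC]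
    funext i
    simp only [treeLam_apply, e1]
    by_cases hik : i = k
    · rw [if_pos (by rw [hik]), if_pos hik]
    · rw [if_neg (fun h => hik (sub_left_inj.mp h)), if_neg hik]
      by_cases hik1 : i = k + 1
      · rw [if_pos (by rw [hik1]; exact e1), if_pos hik1]
      · rw [if_neg (fun h => hik1 (eq_add_of_sub_eq h)), if_neg hik1]
  · have hc' : ¬ ∃ a, a ∈ treeLam ℓ (k + 1 - 1) ∧ a ∈ treeLam ℓ (k + 1) := by
      rw [g1, g2]; exact hc
    rw [treeU_disjoint hc', treeU_disjoint hc]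
    funext i
    simp only [treeLam_apply, e1, g1, g2]
    by_cases hik : i = k
    · rw [if_pos (by rw [hik]), if_pos hik]
    · rw [if_neg (fun h => hik (sub_left_inj.mp h)), if_neg hik]
      by_cases hik1 : i = k + 1
      · rw [if_pos (by rw [hik1]; exact e1), if_pos hik1]
      · rw [if_neg (fun h => hik1 (eq_add_of_sub_eq h)), if_neg hik1]

lemma treeU_comm {k l : ZMod N} {ℓ : ZMod N → Sym2 V}
    (d11 : k - 1 ≠ l - 1) (d12 : k - 1 ≠ l) (d21 : k ≠ l - 1) (d22 : k ≠ l)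
    (hndk1 : ¬ (ℓ (k - 1)).IsDiag) (hndk2 : ¬ (ℓ k).IsDiag) (hnek : ℓ (k - 1) ≠ ℓ k)
    (hndl1 : ¬ (ℓ (l - 1)).IsDiag) (hndl2 : ¬ (ℓ l).IsDiag) (hnel : ℓ (l - 1) ≠ ℓ l) :
    treeU k (treeU l ℓ) = treeU l (treeU k ℓ) := by
  have hk : k - 1 ≠ k := fun h => hnek (congrArg ℓ h)
  have hl : l - 1 ≠ l := fun h => hnel (congrArg ℓ h)
  have EK := treeU_localize (ℓ := ℓ) (m := treeU l ℓ)
    (treeU_apply_ne d11 d12) (treeU_apply_ne d21 d22) hndk1 hndk2 hnek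
  have EL := treeU_localize (ℓ := ℓ) (m := treeU k ℓ)
    (treeU_apply_ne (Ne.symm d11) (Ne.symm d21)) (treeU_apply_ne (Ne.symm d12) (Ne.symm d22))
    hndl1 hndl2 hnel
  rw [EK, EL]
  funext i
  by_cases h1 : i = k - 1
  · rw [if_pos h1, if_neg (h1 ▸ d11), if_neg (h1 ▸ d12), h1]
  · rw [if_neg h1]
    by_cases h2 : i = k
    · rw [if_pos h2, if_neg (h2 ▸ d21), if_neg (h2 ▸ d22), h2]
    · rw [if_neg h2]
      by_cases h3 : i = l - 1
      · rw [if_pos h3, h3]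
      · rw [if_neg h3]
        by_cases h4 : i = l
        · rw [if_pos h4, h4]
        · rw [if_neg h4, treeU_apply_ne h3 h4, treeU_apply_ne h1 h2]

lemma cast_ne_zmod {a b : ℕ} (ha : a < N) (hb : b < N) (hab : a ≠ b) :
    (a : ZMod N) ≠ (b : ZMod N) := by
  haveI : NeZero N := ⟨by omega⟩
  intro h
  apply hab
  have h2 := congrArg ZMod.val h
  rwa [ZMod.val_natCast_of_lt ha, ZMod.val_natCast_of_lt hb] at h2

lemma cast_sub_one {k : ℕ} (hk : 1 ≤ k) :
    ((k - 1 : ℕ) : ZMod N) = (k : ZMod N) - 1 := by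
  rw [Nat.cast_sub hk, Nat.cast_one]

end Layer3

section Braid
open SimpleGraph
variable {N : ℕ}

lemma treeU_braid {k : ZMod N} {ℓ : ZMod N → Sym2 (Fin (N + 1))} (hL : IsLTree ℓ)
    (d01 : k - 1 ≠ k) (d02 : k - 1 ≠ k + 1) (d12 : k ≠ k + 1) :
    treeU k (treeU (k + 1) (treeU k ℓ)) = treeU (k + 1) (treeU k (treeU (k + 1) ℓ)) := by
  obtain ⟨hinj, hnd, htree⟩ := hL
  have e1 : k + 1 - 1 = k := by ring
  have nd0 := hnd (k - 1)
  have nd1 := hnd k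
  have nd2 := hnd (k + 1)
  have d10 : k ≠ k - 1 := Ne.symm d01
  have d20 : k + 1 ≠ k - 1 := Ne.symm d02
  have d21 : k + 1 ≠ k := Ne.symm d12
  have hef : ℓ (k - 1) ≠ ℓ k := fun h => d01 (hinj h)
  have hfg : ℓ k ≠ ℓ (k + 1) := fun h => d12 (hinj h)
  have heg : ℓ (k - 1) ≠ ℓ (k + 1) := fun h => d02 (hinj h)
  have notri : ∀ x y z : Fin (N + 1), x ≠ y → y ≠ z → z ≠ x →
      s(x, y) ∈ Set.range ℓ → s(y, z) ∈ Set.range ℓ → s(z, x) ∈ Set.range ℓ → False :=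
    fun x y z hxy hyz hzx m1 m2 m3 =>
      no_triangle htree.IsAcyclic ((SimpleGraph.fromEdgeSet_adj _).mpr ⟨m1, hxy⟩)
        ((SimpleGraph.fromEdgeSet_adj _).mpr ⟨m2, hyz⟩)
        ((SimpleGraph.fromEdgeSet_adj _).mpr ⟨m3, hzx⟩)
  by_cases cef : ∃ x, x ∈ ℓ (k - 1) ∧ x ∈ ℓ k
  · obtain ⟨a, ha1, ha2⟩ := cef
    obtain ⟨b, he, hab⟩ := rep_of_mem nd0 ha1
    obtain ⟨c, hf, hac⟩ := rep_of_mem nd1 ha2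
    have hbc : b ≠ c := fun h => hef (by rw [he, hf, h])
    have E1 := treeU_common he hf hab hac hbc
    by_cases cfg : ∃ x, x ∈ ℓ k ∧ x ∈ ℓ (k + 1)
    · by_cases ceg : ∃ x, x ∈ ℓ (k - 1) ∧ x ∈ ℓ (k + 1)
      · -- LEAF 1 : all three pairs share; star (or triangle, impossible)
        by_cases hag : a ∈ ℓ (k + 1)
        · obtain ⟨d, hg, had⟩ := rep_of_mem nd2 hag
          have hbd : b ≠ d := fun h => heg (by rw [he, hg, h])
          have hcd : c ≠ d := fun h => hfg (by rw [hf, hg, h])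
          -- LHS
          have v1a : treeU k ℓ (k + 1 - 1) = s(a, b) := by
            rw [e1, E1]; simp [Ne.symm d01]
          have v1b : treeU k ℓ (k + 1) = s(a, d) := by
            rw [E1]; simp [Ne.symm d02, Ne.symm d12]; exact hg
          have E2 := treeU_common v1a v1b hab had hbd
          simp only [e1] at E2
          have v2a : treeU (k + 1) (treeU k ℓ) (k - 1) = s(b, c) := by
            rw [E2]; simp only [if_neg d01, if_neg d02]
            rw [E1]; simp
          have v2b : treeU (k + 1) (treeU k ℓ) k = s(b, d) := by
            rw [E2]; simp
          have E3 := treeU_common v2a v2b hbc hbd hcd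
          -- RHS
          have w0a : ℓ (k + 1 - 1) = s(a, c) := by rw [e1]; exact hf
          have F1 := treeU_common w0a hg hac had hcd
          simp only [e1] at F1
          have w1a : treeU (k + 1) ℓ (k - 1) = s(a, b) := by
            rw [F1]; simp only [if_neg d01, if_neg d02]; exact he
          have w1b : treeU (k + 1) ℓ k = s(c, d) := by rw [F1]; simp
          have hd1 : ¬∃ x, x ∈ treeU (k + 1) ℓ (k - 1) ∧ x ∈ treeU (k + 1) ℓ k := by
            rw [w1a, w1b]; exact disj_pair hac had hbc hbd
          have F2 := treeU_disjoint hd1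
          have w2a : treeU k (treeU (k + 1) ℓ) (k + 1 - 1) = s(a, b) := by
            rw [e1, F2]; simp [Ne.symm d01]; exact w1a
          have w2b : treeU k (treeU (k + 1) ℓ) (k + 1) = s(a, c) := by
            rw [F2]; simp only [if_neg (Ne.symm d02), if_neg (Ne.symm d12)]
            rw [F1]; simp [Ne.symm d12]
          have F3 := treeU_common w2a w2b hab hac hbc
          simp only [e1] at F3
          rw [E3, F3]
          funext i
          simp only [E2, F2]
          simp only [E1, F1]
          split_ifs <;> first | rfl | exact Sym2.eq_swap | (exfalso; subst_vars; tauto)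
        · -- triangle: impossible
          exfalso
          obtain ⟨x, hx1, hx2⟩ := ceg
          have hxb : x = b := by
            rcases Sym2.mem_iff.mp (he ▸ hx1) with h | h
            · exact absurd (h ▸ hx2) hag
            · exact h
          obtain ⟨y, hy1, hy2⟩ := cfg
          have hyc : y = c := by
            rcases Sym2.mem_iff.mp (hf ▸ hy1) with h | h
            · exact absurd (h ▸ hy2) hag
            · exact h
          have hg : ℓ (k + 1) = s(b, c) :=
            sym2_eq_of_two_mem (hxb ▸ hx2) (hyc ▸ hy2) hbc
          exact notri a b c hab hbc (Ne.symm hac) ⟨k - 1, he⟩ ⟨k + 1, hg⟩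
            ⟨k, by rw [hf]; exact Sym2.eq_swap⟩
      · -- LEAF 2 : e~f, f~g, e~/~g
        have hnef : ∀ x, x ∈ ℓ (k - 1) → x ∉ ℓ (k + 1) := fun x h1 h2 => ceg ⟨x, h1, h2⟩
        obtain ⟨y, hy1, hy2⟩ := cfg
        have hyc : y = c := by
          rcases Sym2.mem_iff.mp (hf ▸ hy1) with h | h
          · exact absurd (h ▸ hy2) (hnef a ha1)
          · exact h
        have hc2 : c ∈ ℓ (k + 1) := hyc ▸ hy2
        obtain ⟨d, hg, hcd⟩ := rep_of_mem nd2 hc2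
        have hbM : b ∈ ℓ (k - 1) := by rw [he]; exact Sym2.mem_mk_right _ _
        have hdg : d ∈ ℓ (k + 1) := by rw [hg]; exact Sym2.mem_mk_right _ _
        have had : a ≠ d := fun h => hnef a ha1 (by rw [h]; exact hdg)
        have hbd : b ≠ d := fun h => hnef b hbM (by rw [h]; exact hdg)
        -- LHS
        have v1a : treeU k ℓ (k + 1 - 1) = s(a, b) := by
          rw [e1, E1]; simp [d10]
        have v1b : treeU k ℓ (k + 1) = s(c, d) := by
          rw [E1]; simp only [if_neg d20, if_neg d21]; exact hg
        have hd1 : ¬∃ x, x ∈ treeU k ℓ (k + 1 - 1) ∧ x ∈ treeU k ℓ (k + 1) := by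
          rw [v1a, v1b]; exact disj_pair hac had hbc hbd
        have E2 := treeU_disjoint hd1
        simp only [e1] at E2
        have v2a : treeU (k + 1) (treeU k ℓ) (k - 1) = s(c, b) := by
          rw [E2]; simp only [if_neg d01, if_neg d02]
          rw [E1]; simp
        have v2b : treeU (k + 1) (treeU k ℓ) k = s(c, d) := by
          rw [E2]; simp; exact v1b
        have E3 := treeU_common v2a v2b (Ne.symm hbc) hcd hbd
        -- RHS
        have w0a : ℓ (k + 1 - 1) = s(c, a) := by rw [e1, hf]; exact Sym2.eq_swap
        have F1 := treeU_common w0a hg (Ne.symm hac) hcd had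
        simp only [e1] at F1
        have w1a : treeU (k + 1) ℓ (k - 1) = s(a, b) := by
          rw [F1]; simp only [if_neg d01, if_neg d02]; exact he
        have w1b : treeU (k + 1) ℓ k = s(a, d) := by
          rw [F1]; simp
        have F2 := treeU_common w1a w1b hab had hbd
        have w2a : treeU k (treeU (k + 1) ℓ) (k + 1 - 1) = s(a, b) := by
          rw [e1, F2]; simp [d10]
        have w2b : treeU k (treeU (k + 1) ℓ) (k + 1) = s(a, c) := by
          rw [F2]; simp only [if_neg d20, if_neg d21]
          rw [F1]; simp [d21]
        have F3 := treeU_common w2a w2b hab hac hbc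
        simp only [e1] at F3
        rw [E3, F3]
        funext i
        simp only [E2, F2]
        simp only [E1, F1]
        split_ifs <;> first | rfl | exact Sym2.eq_swap | (exfalso; subst_vars; tauto)
    · by_cases ceg : ∃ x, x ∈ ℓ (k - 1) ∧ x ∈ ℓ (k + 1)
      · -- LEAF 3 : e~f, f~/~g, e~g
        have hnf : ∀ x, x ∈ ℓ k → x ∉ ℓ (k + 1) := fun x h1 h2 => cfg ⟨x, h1, h2⟩
        obtain ⟨y, hy1, hy2⟩ := ceg
        have hyb : y = b := by
          rcases Sym2.mem_iff.mp (he ▸ hy1) with h | h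
          · exact absurd (h ▸ hy2) (hnf a ha2)
          · exact h
        have hbg : b ∈ ℓ (k + 1) := hyb ▸ hy2
        obtain ⟨d, hg, hbd⟩ := rep_of_mem nd2 hbg
        have hcM : c ∈ ℓ k := by rw [hf]; exact Sym2.mem_mk_right _ _
        have hdg : d ∈ ℓ (k + 1) := by rw [hg]; exact Sym2.mem_mk_right _ _
        have had : a ≠ d := fun h => hnf a ha2 (by rw [h]; exact hdg)
        have hcd : c ≠ d := fun h => hnf c hcM (by rw [h]; exact hdg)
        -- LHS
        have v1a : treeU k ℓ (k + 1 - 1) = s(b, a) := by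
          rw [e1, E1]; simp [d10]
        have v1b : treeU k ℓ (k + 1) = s(b, d) := by
          rw [E1]; simp only [if_neg d20, if_neg d21]; exact hg
        have E2 := treeU_common v1a v1b (Ne.symm hab) hbd had
        simp only [e1] at E2
        have v2a : treeU (k + 1) (treeU k ℓ) (k - 1) = s(b, c) := by
          rw [E2]; simp only [if_neg d01, if_neg d02]
          rw [E1]; simp
        have v2b : treeU (k + 1) (treeU k ℓ) k = s(a, d) := by
          rw [E2]; simp
        have hd1 : ¬∃ x, x ∈ treeU (k + 1) (treeU k ℓ) (k - 1) ∧
            x ∈ treeU (k + 1) (treeU k ℓ) k := by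
          rw [v2a, v2b]; exact disj_pair (Ne.symm hab) hbd (Ne.symm hac) hcd
        have E3 := treeU_disjoint hd1
        -- RHS
        have hd2 : ¬∃ x, x ∈ ℓ (k + 1 - 1) ∧ x ∈ ℓ (k + 1) := by rw [e1]; exact cfg
        have F1 := treeU_disjoint hd2
        simp only [e1] at F1
        have w1a : treeU (k + 1) ℓ (k - 1) = s(b, a) := by
          rw [F1]; simp only [if_neg d01, if_neg d02]; rw [he]; exact Sym2.eq_swap
        have w1b : treeU (k + 1) ℓ k = s(b, d) := by
          rw [F1]; simp; exact hg
        have F2 := treeU_common w1a w1b (Ne.symm hab) hbd had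
        have w2a : treeU k (treeU (k + 1) ℓ) (k + 1 - 1) = s(a, b) := by
          rw [e1, F2]; simp [d10]
        have w2b : treeU k (treeU (k + 1) ℓ) (k + 1) = s(a, c) := by
          rw [F2]; simp only [if_neg d20, if_neg d21]
          rw [F1]; simp [d21]; exact hf
        have F3 := treeU_common w2a w2b hab hac hbc
        simp only [e1] at F3
        rw [E3, F3]
        funext i
        simp only [E2, F2]
        simp only [E1, F1]
        split_ifs <;> first | rfl | exact Sym2.eq_swap | (exfalso; subst_vars; tauto)
      · -- LEAF 4 : e~f only
        have hbM : b ∈ ℓ (k - 1) := by rw [he]; exact Sym2.mem_mk_right _ _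
        have hcM : c ∈ ℓ k := by rw [hf]; exact Sym2.mem_mk_right _ _
        -- LHS
        have v1a : treeU k ℓ (k + 1 - 1) = s(a, b) := by
          rw [e1, E1]; simp [d10]
        have v1b : treeU k ℓ (k + 1) = ℓ (k + 1) := by
          rw [E1]; simp only [if_neg d20, if_neg d21]
        have hd1 : ¬∃ x, x ∈ treeU k ℓ (k + 1 - 1) ∧ x ∈ treeU k ℓ (k + 1) := by
          rw [v1a, v1b]
          rintro ⟨x, hx1, hx2⟩
          rcases Sym2.mem_iff.mp hx1 with rfl | rfl
          · exact ceg ⟨x, ha1, hx2⟩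
          · exact ceg ⟨x, hbM, hx2⟩
        have E2 := treeU_disjoint hd1
        simp only [e1] at E2
        have v2a : treeU (k + 1) (treeU k ℓ) (k - 1) = s(b, c) := by
          rw [E2]; simp only [if_neg d01, if_neg d02]
          rw [E1]; simp
        have v2b : treeU (k + 1) (treeU k ℓ) k = ℓ (k + 1) := by
          rw [E2]; simp; exact v1b
        have hd2 : ¬∃ x, x ∈ treeU (k + 1) (treeU k ℓ) (k - 1) ∧
            x ∈ treeU (k + 1) (treeU k ℓ) k := by
          rw [v2a, v2b]
          rintro ⟨x, hx1, hx2⟩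
          rcases Sym2.mem_iff.mp hx1 with rfl | rfl
          · exact ceg ⟨x, hbM, hx2⟩
          · exact cfg ⟨x, hcM, hx2⟩
        have E3 := treeU_disjoint hd2
        -- RHS
        have hd3 : ¬∃ x, x ∈ ℓ (k + 1 - 1) ∧ x ∈ ℓ (k + 1) := by rw [e1]; exact cfg
        have F1 := treeU_disjoint hd3
        simp only [e1] at F1
        have w1a : treeU (k + 1) ℓ (k - 1) = ℓ (k - 1) := by
          rw [F1]; simp only [if_neg d01, if_neg d02]
        have w1b : treeU (k + 1) ℓ k = ℓ (k + 1) := by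
          rw [F1]; simp
        have hd4 : ¬∃ x, x ∈ treeU (k + 1) ℓ (k - 1) ∧ x ∈ treeU (k + 1) ℓ k := by
          rw [w1a, w1b]; exact ceg
        have F2 := treeU_disjoint hd4
        have w2a : treeU k (treeU (k + 1) ℓ) (k + 1 - 1) = s(a, b) := by
          rw [e1, F2]; simp [d10]; rw [w1a]; exact he
        have w2b : treeU k (treeU (k + 1) ℓ) (k + 1) = s(a, c) := by
          rw [F2]; simp only [if_neg d20, if_neg d21]
          rw [F1]; simp [d21]; exact hf
        have F3 := treeU_common w2a w2b hab hac hbc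
        simp only [e1] at F3
        rw [E3, F3]
        funext i
        simp only [E2, F2]
        simp only [E1, F1]
        split_ifs <;> first | rfl | exact Sym2.eq_swap | (exfalso; subst_vars; tauto)
  · have hnef : ∀ x, x ∈ ℓ (k - 1) → x ∉ ℓ k := fun x h1 h2 => cef ⟨x, h1, h2⟩
    have E1 := treeU_disjoint cef
    by_cases cfg : ∃ x, x ∈ ℓ k ∧ x ∈ ℓ (k + 1)
    · by_cases ceg : ∃ x, x ∈ ℓ (k - 1) ∧ x ∈ ℓ (k + 1)
      · -- LEAF 5 : f~g, e~g, e~/~f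
        obtain ⟨p, hp1, hp2⟩ := cfg
        obtain ⟨r, hfr, hpr⟩ := rep_of_mem nd1 hp1
        obtain ⟨q, hgq, hpq⟩ := rep_of_mem nd2 hp2
        obtain ⟨y, hy1, hy2⟩ := ceg
        have hyq : y = q := by
          rcases Sym2.mem_iff.mp (hgq ▸ hy2) with h | h
          · exact absurd (h ▸ hy1) (fun hh => hnef p hh hp1)
          · exact h
        have hqe : q ∈ ℓ (k - 1) := hyq ▸ hy1
        obtain ⟨t, hes, hqt⟩ := rep_of_mem nd0 hqe
        have hrM : r ∈ ℓ k := by rw [hfr]; exact Sym2.mem_mk_right _ _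
        have htM : t ∈ ℓ (k - 1) := by rw [hes]; exact Sym2.mem_mk_right _ _
        have hqp : q ≠ p := fun h => hnef q hqe (by rw [h]; exact hp1)
        have hqr : q ≠ r := fun h => hnef q hqe (by rw [h]; exact hrM)
        have htp : t ≠ p := fun h => hnef t htM (by rw [h]; exact hp1)
        have htr : t ≠ r := fun h => hnef t htM (by rw [h]; exact hrM)
        -- LHS
        have v1a : treeU k ℓ (k + 1 - 1) = s(q, t) := by
          rw [e1, E1]; simp [d10]; exact hes
        have v1b : treeU k ℓ (k + 1) = s(q, p) := by
          rw [E1]; simp only [if_neg d20, if_neg d21]; rw [hgq]; exact Sym2.eq_swap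
        have E2 := treeU_common v1a v1b hqt hqp htp
        simp only [e1] at E2
        have v2a : treeU (k + 1) (treeU k ℓ) (k - 1) = s(p, r) := by
          rw [E2]; simp only [if_neg d01, if_neg d02]
          rw [E1]; simp; exact hfr
        have v2b : treeU (k + 1) (treeU k ℓ) k = s(p, t) := by
          rw [E2]; simp
        have E3 := treeU_common v2a v2b hpr (Ne.symm htp) (Ne.symm htr)
        -- RHS
        have w0a : ℓ (k + 1 - 1) = s(p, r) := by rw [e1]; exact hfr
        have F1 := treeU_common w0a hgq hpr hpq (Ne.symm hqr)
        simp only [e1] at F1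
        have w1a : treeU (k + 1) ℓ (k - 1) = s(q, t) := by
          rw [F1]; simp only [if_neg d01, if_neg d02]; exact hes
        have w1b : treeU (k + 1) ℓ k = s(q, r) := by
          rw [F1]; simp
        have F2 := treeU_common w1a w1b hqt hqr htr
        have w2a : treeU k (treeU (k + 1) ℓ) (k + 1 - 1) = s(q, t) := by
          rw [e1, F2]; simp [d10]
        have w2b : treeU k (treeU (k + 1) ℓ) (k + 1) = s(p, r) := by
          rw [F2]; simp only [if_neg d20, if_neg d21]
          rw [F1]; simp [d21]
        have hd5 : ¬∃ x, x ∈ treeU k (treeU (k + 1) ℓ) (k + 1 - 1) ∧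
            x ∈ treeU k (treeU (k + 1) ℓ) (k + 1) := by
          rw [w2a, w2b]; exact disj_pair hqp hqr htp htr
        have F3 := treeU_disjoint hd5
        simp only [e1] at F3
        rw [E3, F3]
        funext i
        simp only [E2, F2]
        simp only [E1, F1]
        split_ifs <;> first | rfl | exact Sym2.eq_swap | (exfalso; subst_vars; tauto)
      · -- LEAF 6 : f~g only
        obtain ⟨p, hp1, hp2⟩ := cfg
        obtain ⟨q, hfq, hpq⟩ := rep_of_mem nd1 hp1
        obtain ⟨r, hgr, hpr⟩ := rep_of_mem nd2 hp2
        have hqr : q ≠ r := fun h => hfg (by rw [hfq, hgr, h])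
        have hqM : q ∈ ℓ k := by rw [hfq]; exact Sym2.mem_mk_right _ _
        have hrM : r ∈ ℓ (k + 1) := by rw [hgr]; exact Sym2.mem_mk_right _ _
        -- LHS
        have v1a : treeU k ℓ (k + 1 - 1) = ℓ (k - 1) := by
          rw [e1, E1]; simp [d10]
        have v1b : treeU k ℓ (k + 1) = ℓ (k + 1) := by
          rw [E1]; simp only [if_neg d20, if_neg d21]
        have hd1 : ¬∃ x, x ∈ treeU k ℓ (k + 1 - 1) ∧ x ∈ treeU k ℓ (k + 1) := by
          rw [v1a, v1b]; exact ceg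
        have E2 := treeU_disjoint hd1
        simp only [e1] at E2
        have v2a : treeU (k + 1) (treeU k ℓ) (k - 1) = s(p, q) := by
          rw [E2]; simp only [if_neg d01, if_neg d02]
          rw [E1]; simp; exact hfq
        have v2b : treeU (k + 1) (treeU k ℓ) k = s(p, r) := by
          rw [E2]; simp; rw [v1b]; exact hgr
        have E3 := treeU_common v2a v2b hpq hpr hqr
        -- RHS
        have w0a : ℓ (k + 1 - 1) = s(p, q) := by rw [e1]; exact hfq
        have F1 := treeU_common w0a hgr hpq hpr hqr
        simp only [e1] at F1
        have w1a : treeU (k + 1) ℓ (k - 1) = ℓ (k - 1) := by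
          rw [F1]; simp only [if_neg d01, if_neg d02]
        have w1b : treeU (k + 1) ℓ k = s(q, r) := by
          rw [F1]; simp
        have hd2 : ¬∃ x, x ∈ treeU (k + 1) ℓ (k - 1) ∧ x ∈ treeU (k + 1) ℓ k := by
          rw [w1a, w1b]
          rintro ⟨x, hx1, hx2⟩
          rcases Sym2.mem_iff.mp hx2 with rfl | rfl
          · exact cef ⟨x, hx1, hqM⟩
          · exact ceg ⟨x, hx1, hrM⟩
        have F2 := treeU_disjoint hd2
        have w2a : treeU k (treeU (k + 1) ℓ) (k + 1 - 1) = ℓ (k - 1) := by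
          rw [e1, F2]; simp [d10]; exact w1a
        have w2b : treeU k (treeU (k + 1) ℓ) (k + 1) = s(p, q) := by
          rw [F2]; simp only [if_neg d20, if_neg d21]
          rw [F1]; simp [d21]
        have hd3 : ¬∃ x, x ∈ treeU k (treeU (k + 1) ℓ) (k + 1 - 1) ∧
            x ∈ treeU k (treeU (k + 1) ℓ) (k + 1) := by
          rw [w2a, w2b]
          rintro ⟨x, hx1, hx2⟩
          rcases Sym2.mem_iff.mp hx2 with rfl | rfl
          · exact cef ⟨x, hx1, hp1⟩
          · exact cef ⟨x, hx1, hqM⟩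
        have F3 := treeU_disjoint hd3
        simp only [e1] at F3
        rw [E3, F3]
        funext i
        simp only [E2, F2]
        simp only [E1, F1]
        split_ifs <;> first | rfl | exact Sym2.eq_swap | (exfalso; subst_vars; tauto)
    · by_cases ceg : ∃ x, x ∈ ℓ (k - 1) ∧ x ∈ ℓ (k + 1)
      · -- LEAF 7 : e~g only
        obtain ⟨y, hy1, hy2⟩ := ceg
        obtain ⟨b, heb, hyb⟩ := rep_of_mem nd0 hy1
        obtain ⟨d, hgd, hyd⟩ := rep_of_mem nd2 hy2
        have hbd : b ≠ d := fun h => heg (by rw [heb, hgd, h])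
        have hbM : b ∈ ℓ (k - 1) := by rw [heb]; exact Sym2.mem_mk_right _ _
        have hdM : d ∈ ℓ (k + 1) := by rw [hgd]; exact Sym2.mem_mk_right _ _
        -- LHS
        have v1a : treeU k ℓ (k + 1 - 1) = s(y, b) := by
          rw [e1, E1]; simp [d10]; exact heb
        have v1b : treeU k ℓ (k + 1) = s(y, d) := by
          rw [E1]; simp only [if_neg d20, if_neg d21]; exact hgd
        have E2 := treeU_common v1a v1b hyb hyd hbd
        simp only [e1] at E2
        have v2a : treeU (k + 1) (treeU k ℓ) (k - 1) = ℓ k := by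
          rw [E2]; simp only [if_neg d01, if_neg d02]
          rw [E1]; simp
        have v2b : treeU (k + 1) (treeU k ℓ) k = s(b, d) := by
          rw [E2]; simp
        have hd1 : ¬∃ x, x ∈ treeU (k + 1) (treeU k ℓ) (k - 1) ∧
            x ∈ treeU (k + 1) (treeU k ℓ) k := by
          rw [v2a, v2b]
          rintro ⟨x, hx1, hx2⟩
          rcases Sym2.mem_iff.mp hx2 with rfl | rfl
          · exact cef ⟨x, hbM, hx1⟩
          · exact cfg ⟨x, hx1, hdM⟩
        have E3 := treeU_disjoint hd1
        -- RHS
        have hd2 : ¬∃ x, x ∈ ℓ (k + 1 - 1) ∧ x ∈ ℓ (k + 1) := by rw [e1]; exact cfg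
        have F1 := treeU_disjoint hd2
        simp only [e1] at F1
        have w1a : treeU (k + 1) ℓ (k - 1) = s(y, b) := by
          rw [F1]; simp only [if_neg d01, if_neg d02]; exact heb
        have w1b : treeU (k + 1) ℓ k = s(y, d) := by
          rw [F1]; simp; exact hgd
        have F2 := treeU_common w1a w1b hyb hyd hbd
        have w2a : treeU k (treeU (k + 1) ℓ) (k + 1 - 1) = s(y, b) := by
          rw [e1, F2]; simp [d10]
        have w2b : treeU k (treeU (k + 1) ℓ) (k + 1) = ℓ k := by
          rw [F2]; simp only [if_neg d20, if_neg d21]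
          rw [F1]; simp [d21]
        have hd3 : ¬∃ x, x ∈ treeU k (treeU (k + 1) ℓ) (k + 1 - 1) ∧
            x ∈ treeU k (treeU (k + 1) ℓ) (k + 1) := by
          rw [w2a, w2b]
          rintro ⟨x, hx1, hx2⟩
          rcases Sym2.mem_iff.mp hx1 with rfl | rfl
          · exact cef ⟨x, hy1, hx2⟩
          · exact cef ⟨x, hbM, hx2⟩
        have F3 := treeU_disjoint hd3
        simp only [e1] at F3
        rw [E3, F3]
        funext i
        simp only [E2, F2]
        simp only [E1, F1]
        split_ifs <;> first | rfl | exact Sym2.eq_swap | (exfalso; subst_vars; tauto)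
      · -- LEAF 8 : all disjoint
        have v1a : treeU k ℓ (k + 1 - 1) = ℓ (k - 1) := by
          rw [e1, E1]; simp [d10]
        have v1b : treeU k ℓ (k + 1) = ℓ (k + 1) := by
          rw [E1]; simp only [if_neg d20, if_neg d21]
        have hd1 : ¬∃ x, x ∈ treeU k ℓ (k + 1 - 1) ∧ x ∈ treeU k ℓ (k + 1) := by
          rw [v1a, v1b]; exact ceg
        have E2 := treeU_disjoint hd1
        simp only [e1] at E2
        have v2a : treeU (k + 1) (treeU k ℓ) (k - 1) = ℓ k := by
          rw [E2]; simp only [if_neg d01, if_neg d02]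
          rw [E1]; simp
        have v2b : treeU (k + 1) (treeU k ℓ) k = ℓ (k + 1) := by
          rw [E2]; simp; exact v1b
        have hd2 : ¬∃ x, x ∈ treeU (k + 1) (treeU k ℓ) (k - 1) ∧
            x ∈ treeU (k + 1) (treeU k ℓ) k := by
          rw [v2a, v2b]; exact cfg
        have E3 := treeU_disjoint hd2
        -- RHS
        have hd3 : ¬∃ x, x ∈ ℓ (k + 1 - 1) ∧ x ∈ ℓ (k + 1) := by rw [e1]; exact cfg
        have F1 := treeU_disjoint hd3
        simp only [e1] at F1
        have w1a : treeU (k + 1) ℓ (k - 1) = ℓ (k - 1) := by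
          rw [F1]; simp only [if_neg d01, if_neg d02]
        have w1b : treeU (k + 1) ℓ k = ℓ (k + 1) := by
          rw [F1]; simp
        have hd4 : ¬∃ x, x ∈ treeU (k + 1) ℓ (k - 1) ∧ x ∈ treeU (k + 1) ℓ k := by
          rw [w1a, w1b]; exact ceg
        have F2 := treeU_disjoint hd4
        have w2a : treeU k (treeU (k + 1) ℓ) (k + 1 - 1) = ℓ (k - 1) := by
          rw [e1, F2]; simp [d10]; exact w1a
        have w2b : treeU k (treeU (k + 1) ℓ) (k + 1) = ℓ k := by
          rw [F2]; simp only [if_neg d20, if_neg d21]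
          rw [F1]; simp [d21]
        have hd5 : ¬∃ x, x ∈ treeU k (treeU (k + 1) ℓ) (k + 1 - 1) ∧
            x ∈ treeU k (treeU (k + 1) ℓ) (k + 1) := by
          rw [w2a, w2b]; exact cef
        have F3 := treeU_disjoint hd5
        simp only [e1] at F3
        rw [E3, F3]
        funext i
        simp only [E2, F2]
        simp only [E1, F1]
        split_ifs <;> first | rfl | exact Sym2.eq_swap | (exfalso; subst_vars; tauto)

end Braid

/-- the tree operations `U_1, …, U_{N-1}` and `Λ` are well defined (each sends
a tree with `N` labeled edges to a tree with `N` labeled edges), each is a bijection of the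
set of isomorphism classes of trees with `N` labeled edges (it respects isomorphism and is
injective and surjective on classes), and they satisfy the braid-cyclic relations:
`Λ^N = id`, `Λ ∘ U_k = U_{k+1} ∘ Λ` for `k = 1, …, N-2`, `U_k ∘ U_l = U_l ∘ U_k` whenever
`|k - l| ≥ 2`, and `U_k ∘ U_{k+1} ∘ U_k = U_{k+1} ∘ U_k ∘ U_{k+1}` for `k = 1, …, N-2`
(all as operations on isomorphism classes). -/
theorem stmt_4 (N : ℕ) (hN : 1 ≤ N) :
    -- well-definedness
    (∀ ℓ : ZMod N → Sym2 (Fin (N + 1)), IsLTree ℓ → IsLTree (treeLam ℓ)) ∧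
    (∀ k : ℕ, 1 ≤ k → k ≤ N - 1 →
      ∀ ℓ : ZMod N → Sym2 (Fin (N + 1)), IsLTree ℓ → IsLTree (treeU (k : ZMod N) ℓ)) ∧
    -- the operations descend to isomorphism classes
    (∀ ℓ ℓ' : ZMod N → Sym2 (Fin (N + 1)), IsLTree ℓ → IsLTree ℓ' → treeEquiv ℓ ℓ' →
      treeEquiv (treeLam ℓ) (treeLam ℓ')) ∧
    (∀ k : ℕ, 1 ≤ k → k ≤ N - 1 →
      ∀ ℓ ℓ' : ZMod N → Sym2 (Fin (N + 1)), IsLTree ℓ → IsLTree ℓ' → treeEquiv ℓ ℓ' →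
      treeEquiv (treeU (k : ZMod N) ℓ) (treeU (k : ZMod N) ℓ')) ∧
    -- bijectivity on isomorphism classes: injectivity and surjectivity
    (∀ ℓ ℓ' : ZMod N → Sym2 (Fin (N + 1)), IsLTree ℓ → IsLTree ℓ' →
      treeEquiv (treeLam ℓ) (treeLam ℓ') → treeEquiv ℓ ℓ') ∧
    (∀ m : ZMod N → Sym2 (Fin (N + 1)), IsLTree m →
      ∃ ℓ : ZMod N → Sym2 (Fin (N + 1)), IsLTree ℓ ∧ treeEquiv (treeLam ℓ) m) ∧
    (∀ k : ℕ, 1 ≤ k → k ≤ N - 1 →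
      ∀ ℓ ℓ' : ZMod N → Sym2 (Fin (N + 1)), IsLTree ℓ → IsLTree ℓ' →
      treeEquiv (treeU (k : ZMod N) ℓ) (treeU (k : ZMod N) ℓ') → treeEquiv ℓ ℓ') ∧
    (∀ k : ℕ, 1 ≤ k → k ≤ N - 1 →
      ∀ m : ZMod N → Sym2 (Fin (N + 1)), IsLTree m →
      ∃ ℓ : ZMod N → Sym2 (Fin (N + 1)), IsLTree ℓ ∧ treeEquiv (treeU (k : ZMod N) ℓ) m) ∧
    -- braid-cyclic relations (as operations on isomorphism classes)
    (∀ ℓ : ZMod N → Sym2 (Fin (N + 1)), IsLTree ℓ →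
      treeEquiv ((treeLam (N := N) (V := Fin (N + 1)))^[N] ℓ) ℓ) ∧
    (∀ k : ℕ, 1 ≤ k → k ≤ N - 2 → ∀ ℓ : ZMod N → Sym2 (Fin (N + 1)), IsLTree ℓ →
      treeEquiv (treeLam (treeU (k : ZMod N) ℓ))
        (treeU ((k + 1 : ℕ) : ZMod N) (treeLam ℓ))) ∧
    (∀ k l : ℕ, 1 ≤ k → k ≤ N - 1 → 1 ≤ l → l ≤ N - 1 → 2 ≤ ((k : ℤ) - l).natAbs →
      ∀ ℓ : ZMod N → Sym2 (Fin (N + 1)), IsLTree ℓ →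
      treeEquiv (treeU (k : ZMod N) (treeU (l : ZMod N) ℓ))
        (treeU (l : ZMod N) (treeU (k : ZMod N) ℓ))) ∧
    (∀ k : ℕ, 1 ≤ k → k ≤ N - 2 → ∀ ℓ : ZMod N → Sym2 (Fin (N + 1)), IsLTree ℓ →
      treeEquiv (treeU (k : ZMod N) (treeU ((k + 1 : ℕ) : ZMod N) (treeU (k : ZMod N) ℓ)))
        (treeU ((k + 1 : ℕ) : ZMod N) (treeU (k : ZMod N) (treeU ((k + 1 : ℕ) : ZMod N) ℓ)))) := by
  have key : ∀ k : ℕ, 1 ≤ k → k ≤ N - 1 → ((k : ZMod N) - 1) ≠ (k : ZMod N) := by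
    intro k hk1 hk2
    rw [← cast_sub_one hk1]
    exact cast_ne_zmod (by omega) (by omega) (by omega)
  refine ⟨fun ℓ hL => isLTree_treeLam hL, ?_, ?_, ?_, ?_, ?_, ?_, ?_, ?_, ?_, ?_, ?_⟩
  · exact fun k hk1 hk2 ℓ hL => isLTree_treeU hL (key k hk1 hk2)
  · rintro ℓ ℓ' hL hL' ⟨σ, hσ⟩
    exact ⟨σ, fun i => hσ (i - 1)⟩
  · rintro k hk1 hk2 ℓ ℓ' hL hL' ⟨σ, hσ⟩
    have hne : ℓ ((k : ZMod N) - 1) ≠ ℓ (k : ZMod N) := fun h => key k hk1 hk2 (hL.1 h)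
    have hfun : ℓ' = fun i => Sym2.map σ (ℓ i) := funext hσ
    refine ⟨σ, fun i => ?_⟩
    rw [hfun, treeU_map (hL.2.1 _) (hL.2.1 _) hne]
  · rintro ℓ ℓ' hL hL' ⟨σ, hσ⟩
    refine ⟨σ, fun i => ?_⟩
    simpa [treeLam_apply] using hσ (i + 1)
  · intro m hm
    refine ⟨fun i => m (i + 1), ?_, ?_⟩
    · have h : (fun i : ZMod N => m (i + 1)) = m ∘ (Equiv.addRight (1 : ZMod N)) := rfl
      rw [h]; exact isLTree_comp hm _
    · exact ⟨1, fun i => by simp [treeLam_apply, Sym2.map_id]⟩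
  · intro k hk1 hk2 ℓ ℓ' hL hL' hU
    have hk := key k hk1 hk2
    obtain ⟨σ, hσ⟩ := hU
    have hneℓ : ℓ ((k : ZMod N) - 1) ≠ ℓ (k : ZMod N) := fun h => hk (hL.1 h)
    have hneℓ' : ℓ' ((k : ZMod N) - 1) ≠ ℓ' (k : ZMod N) := fun h => hk (hL'.1 h)
    have hLU := isLTree_treeU hL hk
    have hLU2 := isLTree_treeU hLU hk
    have hfun : treeU (k : ZMod N) ℓ' = fun i => Sym2.map σ (treeU (k : ZMod N) ℓ i) :=
      funext hσ
    by_cases hc : ∃ a, a ∈ ℓ ((k : ZMod N) - 1) ∧ a ∈ ℓ (k : ZMod N)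
    · obtain ⟨A, B, C, h1, h2, hAB, hAC, hBC⟩ :=
        common_extract (hL.2.1 _) (hL.2.1 _) hneℓ hc
      have cube := treeU_cube hk h1 h2 hAB hAC hBC
      have hcU := (common_treeU (hL.2.1 _) (hL.2.1 _) hneℓ).mpr hc
      have hcU' : ∃ a, a ∈ treeU (k : ZMod N) ℓ' ((k : ZMod N) - 1) ∧
          a ∈ treeU (k : ZMod N) ℓ' (k : ZMod N) := by
        simp only [hσ]
        exact common_map.mpr hcU
      have hc' := (common_treeU (hL'.2.1 _) (hL'.2.1 _) hneℓ').mp hcU'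
      obtain ⟨A', B', C', h1', h2', hAB', hAC', hBC'⟩ :=
        common_extract (hL'.2.1 _) (hL'.2.1 _) hneℓ' hc'
      have cube' := treeU_cube hk h1' h2' hAB' hAC' hBC'
      refine ⟨σ, fun i => ?_⟩
      conv_lhs => rw [← cube']
      rw [hfun, treeU_map (hLU.2.1 _) (hLU.2.1 _) (fun h => hk (hLU.1 h)),
        treeU_map (hLU2.2.1 _) (hLU2.2.1 _) (fun h => hk (hLU2.1 h)), cube]
    · have sq := treeU_sq hk hc
      have hcU : ¬∃ a, a ∈ treeU (k : ZMod N) ℓ ((k : ZMod N) - 1) ∧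
          a ∈ treeU (k : ZMod N) ℓ (k : ZMod N) :=
        fun h => hc ((common_treeU (hL.2.1 _) (hL.2.1 _) hneℓ).mp h)
      have hcU' : ¬∃ a, a ∈ treeU (k : ZMod N) ℓ' ((k : ZMod N) - 1) ∧
          a ∈ treeU (k : ZMod N) ℓ' (k : ZMod N) := by
        simp only [hσ]
        exact fun h => hcU (common_map.mp h)
      have hc' : ¬∃ a, a ∈ ℓ' ((k : ZMod N) - 1) ∧ a ∈ ℓ' (k : ZMod N) :=
        fun h => hcU' ((common_treeU (hL'.2.1 _) (hL'.2.1 _) hneℓ').mpr h)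
      have sq' := treeU_sq hk hc'
      refine ⟨σ, fun i => ?_⟩
      conv_lhs => rw [← sq']
      rw [hfun, treeU_map (hLU.2.1 _) (hLU.2.1 _) (fun h => hk (hLU.1 h)), sq]
  · intro k hk1 hk2 m hm
    have hk := key k hk1 hk2
    have hnem : m ((k : ZMod N) - 1) ≠ m (k : ZMod N) := fun h => hk (hm.1 h)
    by_cases hc : ∃ a, a ∈ m ((k : ZMod N) - 1) ∧ a ∈ m (k : ZMod N)
    · obtain ⟨A, B, C, h1, h2, hAB, hAC, hBC⟩ :=
        common_extract (hm.2.1 _) (hm.2.1 _) hnem hc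
      have cube := treeU_cube hk h1 h2 hAB hAC hBC
      exact ⟨treeU _ (treeU _ m), isLTree_treeU (isLTree_treeU hm hk) hk,
        ⟨1, fun i => by rw [cube]; simp [Sym2.map_id]⟩⟩
    · have sq := treeU_sq hk hc
      exact ⟨treeU _ m, isLTree_treeU hm hk,
        ⟨1, fun i => by rw [sq]; simp [Sym2.map_id]⟩⟩
  · intro ℓ hL
    have h : (treeLam (N := N) (V := Fin (N + 1)))^[N] ℓ = ℓ := by
      rw [treeLam_iterate]
      funext i
      simp
    rw [h]
    exact treeEquiv_refl ℓ
  · intro k hk1 hk2 ℓ hL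
    have hk := key k hk1 (by omega)
    have hne : ℓ ((k : ZMod N) - 1) ≠ ℓ (k : ZMod N) := fun h => hk (hL.1 h)
    have hcast : ((k + 1 : ℕ) : ZMod N) = (k : ZMod N) + 1 := by push_cast; ring
    rw [hcast]
    exact treeEquiv_of_eq (treeLam_treeU (hL.2.1 _) (hL.2.1 _) hne).symm
  · intro k l hk1 hk2 hl1 hl2 habs ℓ hL
    have c1 : ((k : ZMod N) - 1) = ((k - 1 : ℕ) : ZMod N) := (cast_sub_one hk1).symm
    have c2 : ((l : ZMod N) - 1) = ((l - 1 : ℕ) : ZMod N) := (cast_sub_one hl1).symm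
    have d11 : (k : ZMod N) - 1 ≠ (l : ZMod N) - 1 := by
      rw [c1, c2]; exact cast_ne_zmod (by omega) (by omega) (by omega)
    have d12 : (k : ZMod N) - 1 ≠ (l : ZMod N) := by
      rw [c1]; exact cast_ne_zmod (by omega) (by omega) (by omega)
    have d21 : (k : ZMod N) ≠ (l : ZMod N) - 1 := by
      rw [c2]; exact cast_ne_zmod (by omega) (by omega) (by omega)
    have d22 : (k : ZMod N) ≠ (l : ZMod N) := cast_ne_zmod (by omega) (by omega) (by omega)
    have hnek : ℓ ((k : ZMod N) - 1) ≠ ℓ (k : ZMod N) := fun h => key k hk1 hk2 (hL.1 h)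
    have hnel : ℓ ((l : ZMod N) - 1) ≠ ℓ (l : ZMod N) := fun h => key l hl1 hl2 (hL.1 h)
    exact treeEquiv_of_eq (treeU_comm d11 d12 d21 d22 (hL.2.1 _) (hL.2.1 _) hnek
      (hL.2.1 _) (hL.2.1 _) hnel).symm
  · intro k hk1 hk2 ℓ hL
    have hcast : ((k + 1 : ℕ) : ZMod N) = (k : ZMod N) + 1 := by push_cast; ring
    have c1 : ((k : ZMod N) - 1) = ((k - 1 : ℕ) : ZMod N) := (cast_sub_one hk1).symm
    have d01 : (k : ZMod N) - 1 ≠ (k : ZMod N) := key k hk1 (by omega)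
    have d02 : (k : ZMod N) - 1 ≠ (k : ZMod N) + 1 := by
      rw [c1, ← hcast]; exact cast_ne_zmod (by omega) (by omega) (by omega)
    have d12 : (k : ZMod N) ≠ (k : ZMod N) + 1 := by
      rw [← hcast]; exact cast_ne_zmod (by omega) (by omega) (by omega)
    rw [hcast]
    exact treeEquiv_of_eq (treeU_braid hL d01 d02 d12).symm
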